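/- Let d ≥ 1 and m ≥ 2 be integers, g ≥ 0, L ≥ 0 real numbers, and r ≥ d+2. Consider the MBSP instance given by the zipper DAG Z(d,m) with P = 2 processors and cache capacity r. In every valid schedule in which every COMPUTE transition of a child of H_1 occurs on processor 1 and every COMPUTE transition of a child of H_2 occurs on processor 2, each of the 2(m−1) nodes in {v_i, u_i : i ∈ [m−1]} is the subject of at least one SAVE transition and at least one LOAD transition; consequently, the synchronous cost of every such schedule is at least 2(m−1)·g. -/

import Mathlib

namespace MBSP

/-- A transition (pebbling move) of a single processor. -/
inductive Op (ν : Type) where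
  | load : ν → Op ν
  | save : ν → Op ν
  | compute : ν → Op ν
  | delete : ν → Op ν
deriving DecidableEq

/-- An MBSP instance: a DAG with compute weights `ω`, memory weights `μ`,
`P` processors, cache capacity `r`, communication cost `g` and synchronization cost `L`. -/
structure Inst (ν : Type) where
  edge : ν → ν → Prop
  ω : ν → ℝ
  μ : ν → ℝ
  P : ℕ
  r : ℝ
  g : ℝ
  L : ℝ

variable {ν : Type} [DecidableEq ν]

def isSource (I : Inst ν) (v : ν) : Prop := ¬ ∃ u, I.edge u v

def isSink (I : Inst ν) (v : ν) : Prop := ¬ ∃ u, I.edge v u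

def Acyclic (I : Inst ν) : Prop := ∀ v, ¬ Relation.TransGen I.edge v v

def opCost (I : Inst ν) : Op ν → ℝ
  | .load v => I.μ v * I.g
  | .save v => I.μ v * I.g
  | .compute v => I.ω v
  | .delete _ => 0

def applyOp (R B : Finset ν) : Op ν → Finset ν × Finset ν
  | .load v => (insert v R, B)
  | .save v => (R, insert v B)
  | .compute v => (insert v R, B)
  | .delete v => (R.erase v, B)

def opOK (I : Inst ν) (R B : Finset ν) : Op ν → Prop
  | .load v => v ∈ B
  | .save v => v ∈ R
  | .compute v => (∃ u, I.edge u v) ∧ ∀ u, I.edge u v → u ∈ R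
  | .delete _ => True

/-- The memory bound for a cache content `R`. -/
def memOK (I : Inst ν) (R : Finset ν) : Prop := ∑ v ∈ R, I.μ v ≤ I.r

/-- Run a sequence of transitions of one processor on a pair (cache, slow memory). -/
def run (R B : Finset ν) : List (Op ν) → Finset ν × Finset ν
  | [] => (R, B)
  | op :: rest => run (applyOp R B op).1 (applyOp R B op).2 rest

/-- Validity of a sequence of transitions of one processor: every precondition holds
when the transition is applied and the memory bound holds throughout. -/
def seqValid (I : Inst ν) (R B : Finset ν) : List (Op ν) → Prop
  | [] => True
  | op :: rest => opOK I R B op ∧ memOK I (applyOp R B op).1 ∧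
      seqValid I (applyOp R B op).1 (applyOp R B op).2 rest

/-- A superstep: for every processor, a compute phase (computes and deletes),
then a save phase, a delete phase and a load phase. -/
structure Superstep (ν : Type) (P : ℕ) where
  comp : Fin P → List (Op ν)
  save : Fin P → List ν
  del : Fin P → List ν
  load : Fin P → List ν

structure Config (ν : Type) (P : ℕ) where
  R : Fin P → Finset ν
  B : Finset ν

abbrev Schedule (ν : Type) (P : ℕ) := List (Superstep ν P)

variable {P : ℕ}

def compOnly (l : List (Op ν)) : Prop :=
  ∀ op ∈ l, (∃ v, op = Op.compute v) ∨ (∃ v, op = Op.delete v)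

def afterComp (c : Config ν P) (S : Superstep ν P) (p : Fin P) : Finset ν :=
  (run (c.R p) c.B (S.comp p)).1

/-- The shared slow memory after the save phases of all processors. -/
def newB (c : Config ν P) (S : Superstep ν P) : Finset ν :=
  c.B ∪ Finset.univ.biUnion (fun p => (S.save p).toFinset)

def afterDel (c : Config ν P) (S : Superstep ν P) (p : Fin P) : Finset ν :=
  (S.del p).foldl Finset.erase (afterComp c S p)

def afterLoad (c : Config ν P) (S : Superstep ν P) (p : Fin P) : Finset ν :=
  afterDel c S p ∪ (S.load p).toFinset

/-- The configuration reached after executing a superstep. -/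
def stepConfig (c : Config ν P) (S : Superstep ν P) : Config ν P :=
  ⟨fun p => afterLoad c S p, newB c S⟩

/-- Validity of a superstep at a configuration. -/
def ssValid (I : Inst ν) (c : Config ν I.P) (S : Superstep ν I.P) : Prop :=
  (∀ p, compOnly (S.comp p)) ∧
  (∀ p, seqValid I (c.R p) c.B (S.comp p)) ∧
  (∀ p, ∀ v ∈ S.save p, v ∈ afterComp c S p) ∧
  (∀ p, ∀ v ∈ S.load p, v ∈ newB c S) ∧
  (∀ p, memOK I (afterLoad c S p))

def runSched (c : Config ν P) : Schedule ν P → Config ν P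
  | [] => c
  | S :: rest => runSched (stepConfig c S) rest

def schedValidFrom (I : Inst ν) (c : Config ν I.P) : Schedule ν I.P → Prop
  | [] => True
  | S :: rest => ssValid I c S ∧ schedValidFrom I (stepConfig c S) rest

/-- `B` is exactly the set of sources of the DAG. -/
def initB (I : Inst ν) (B : Finset ν) : Prop := ∀ v, v ∈ B ↔ isSource I v

/-- A valid MBSP schedule: starts with empty caches and the sources in slow memory,
every transition is legal and the memory bound holds throughout, and at the end
every sink is in slow memory. -/
def Valid (I : Inst ν) (sched : Schedule ν I.P) : Prop :=
  ∃ B0 : Finset ν, initB I B0 ∧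
    schedValidFrom I ⟨fun _ => ∅, B0⟩ sched ∧
    ∀ v, isSink I v → v ∈ (runSched (⟨fun _ => ∅, B0⟩ : Config ν I.P) sched).B

def listCost (I : Inst ν) (l : List (Op ν)) : ℝ := (l.map (opCost I)).sum

def ioCost (I : Inst ν) (l : List ν) : ℝ := (l.map (fun v => I.μ v * I.g)).sum

/-- The synchronous cost of a superstep. -/
noncomputable def ssCost (I : Inst ν) (S : Superstep ν I.P) : ℝ :=
  (⨆ p : Fin I.P, listCost I (S.comp p)) + (⨆ p : Fin I.P, ioCost I (S.save p)) +
    (⨆ p : Fin I.P, ioCost I (S.load p)) + I.L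

/-- The synchronous cost of a schedule. -/
noncomputable def syncCost (I : Inst ν) (sched : Schedule ν I.P) : ℝ :=
  (sched.map (ssCost I)).sum

/-- Finishing times of the saves in a save phase starting at time `t`. -/
def saveFinishes (I : Inst ν) : ℝ → List ν → List (ν × ℝ)
  | _, [] => []
  | t, v :: rest => (v, t + I.μ v * I.g) :: saveFinishes I (t + I.μ v * I.g) rest

def minSaveTime (entries : List (ν × ℝ)) (v : ν) : Option ℝ :=
  ((entries.filter (fun e => e.1 == v)).map Prod.snd).min?

/-- Finishing time of a load phase: each load waits for the value to be available
in slow memory (time `Γ v`). -/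
def loadFold (I : Inst ν) (Γ : ν → Option ℝ) : ℝ → List ν → ℝ
  | t, [] => t
  | t, v :: rest => loadFold I Γ (max t ((Γ v).getD 0) + I.μ v * I.g) rest

/-- One superstep of the asynchronous execution: updates the finishing time of
every processor and the availability times `Γ` of the values in slow memory. -/
def asyncSS (I : Inst ν) (S : Superstep ν I.P)
    (st : (Fin I.P → ℝ) × (ν → Option ℝ)) : (Fin I.P → ℝ) × (ν → Option ℝ) :=
  let t1 : Fin I.P → ℝ := fun p => st.1 p + listCost I (S.comp p)
  let entries : List (ν × ℝ) :=
    ((List.finRange I.P).map (fun p => saveFinishes I (t1 p) (S.save p))).flatten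
  let Γ' : ν → Option ℝ := fun v => (st.2 v).orElse (fun _ => minSaveTime entries v)
  let t2 : Fin I.P → ℝ := fun p => t1 p + ioCost I (S.save p)
  (fun p => loadFold I Γ' (t2 p) (S.load p), Γ')

def asyncRun (I : Inst ν) (st : (Fin I.P → ℝ) × (ν → Option ℝ)) :
    Schedule ν I.P → (Fin I.P → ℝ) × (ν → Option ℝ)
  | [] => st
  | S :: rest => asyncRun I (asyncSS I S st) rest

/-- The asynchronous cost (makespan) of a schedule. -/
noncomputable def asyncCost (I : Inst ν) (sched : Schedule ν I.P) : ℝ :=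
  ⨆ p : Fin I.P, (asyncRun I (fun _ => (0 : ℝ), fun _ => none) sched).1 p

end MBSP

namespace MBSP

/-- Nodes of the zipper DAG `Z(d,m)`: two groups `H₁`, `H₂` of `d` source nodes
each, and two chains `v_1,…,v_m` and `u_1,…,u_m` (index `i ∈ [m]` is `Fin`-value `i-1`). -/
inductive ZNode (d m : ℕ) where
  | h1 : Fin d → ZNode d m
  | h2 : Fin d → ZNode d m
  | v : Fin m → ZNode d m
  | u : Fin m → ZNode d m
deriving DecidableEq, Fintype

/-- Edges of the zipper DAG `Z(d,m)`. -/
def zEdge (d m : ℕ) : ZNode d m → ZNode d m → Prop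
  | .v i, .v j => (j : ℕ) = (i : ℕ) + 1
  | .u i, .u j => (j : ℕ) = (i : ℕ) + 1
  | .h1 _, .u i => Odd ((i : ℕ) + 1)
  | .h1 _, .v i => Even ((i : ℕ) + 1)
  | .h2 _, .v i => Odd ((i : ℕ) + 1)
  | .h2 _, .u i => Even ((i : ℕ) + 1)
  | _, _ => False

/-- The MBSP instance on the zipper DAG `Z(d,m)` with `P = 2` processors, cache
capacity `r`, communication cost `g` and synchronization cost `L`; all compute and
memory weights are `1`. -/
def zipper (d m : ℕ) (r g L : ℝ) : Inst (ZNode d m) where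
  edge := zEdge d m
  ω := fun _ => 1
  μ := fun _ => 1
  P := 2
  r := r
  g := g
  L := L

end MBSP

namespace MBSP

section Aux

variable {ν : Type} [DecidableEq ν]

lemma foldl_erase_subset (dl : List ν) (s : Finset ν) :
    dl.foldl Finset.erase s ⊆ s := by
  induction dl generalizing s with
  | nil => exact fun _ h => h
  | cons v rest ih =>
      exact fun y hy => Finset.erase_subset _ _ (ih (s.erase v) hy)

lemma mem_run_fst {y : ν} : ∀ (l : List (Op ν)) (R B : Finset ν),
    y ∈ (run R B l).1 → y ∈ R ∨ Op.compute y ∈ l ∨ Op.load y ∈ l := by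
  intro l
  induction l with
  | nil => intro R B hy; exact Or.inl hy
  | cons op rest ih =>
      intro R B hy
      rcases ih _ _ hy with h | h | h
      · cases op with
        | load v =>
            rcases Finset.mem_insert.1 h with h1 | h1
            · subst h1; exact Or.inr (Or.inr (List.mem_cons_self))
            · exact Or.inl h1
        | save v => exact Or.inl h
        | compute v =>
            rcases Finset.mem_insert.1 h with h1 | h1
            · subst h1; exact Or.inr (Or.inl (List.mem_cons_self))
            · exact Or.inl h1
        | delete v => exact Or.inl (Finset.erase_subset _ _ h)
      · exact Or.inr (Or.inl (List.mem_cons_of_mem _ h))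
      · exact Or.inr (Or.inr (List.mem_cons_of_mem _ h))

lemma parent_mem_of_compute (I : Inst ν) {x x' : ν} (hedge : I.edge x x') :
    ∀ (l : List (Op ν)) (R B : Finset ν),
    seqValid I R B l → Op.compute x' ∈ l →
    x ∈ R ∨ Op.compute x ∈ l ∨ Op.load x ∈ l := by
  intro l
  induction l with
  | nil => intro R B _ hmem; simp at hmem
  | cons op rest ih =>
      intro R B hval hmem
      obtain ⟨hok, _, hrest⟩ := hval
      rcases List.mem_cons.1 hmem with h | h
      · subst h
        exact Or.inl (hok.2 x hedge)
      · rcases ih _ _ hrest h with h1 | h1 | h1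
        · cases op with
          | load v =>
              rcases Finset.mem_insert.1 h1 with h2 | h2
              · subst h2; exact Or.inr (Or.inr (List.mem_cons_self))
              · exact Or.inl h2
          | save v => exact Or.inl h1
          | compute v =>
              rcases Finset.mem_insert.1 h1 with h2 | h2
              · subst h2; exact Or.inr (Or.inl (List.mem_cons_self))
              · exact Or.inl h2
          | delete v => exact Or.inl (Finset.erase_subset _ _ h1)
        · exact Or.inr (Or.inl (List.mem_cons_of_mem _ h1))
        · exact Or.inr (Or.inr (List.mem_cons_of_mem _ h1))

lemma afterComp_origin {I : Inst ν} {c : Config ν I.P} {S : Superstep ν I.P}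
    (hss : ssValid I c S) {p : Fin I.P} {y : ν} (hy : y ∈ afterComp c S p) :
    y ∈ c.R p ∨ Op.compute y ∈ S.comp p := by
  rcases mem_run_fst _ _ _ hy with h | h | h
  · exact Or.inl h
  · exact Or.inr h
  · rcases hss.1 p _ h with ⟨v, hv⟩ | ⟨v, hv⟩ <;> simp at hv

lemma newB_origin {I : Inst ν} {c : Config ν I.P} {S : Superstep ν I.P}
    (hss : ssValid I c S) {y : ν} (hy : y ∈ newB c S) :
    y ∈ c.B ∨ (∃ q, y ∈ c.R q) ∨ ∃ q, Op.compute y ∈ S.comp q := by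
  rcases Finset.mem_union.1 hy with h | h
  · exact Or.inl h
  · obtain ⟨q, _, hq⟩ := Finset.mem_biUnion.1 h
    have := hss.2.2.1 q y (List.mem_toFinset.1 hq)
    rcases afterComp_origin hss this with h1 | h1
    · exact Or.inr (Or.inl ⟨q, h1⟩)
    · exact Or.inr (Or.inr ⟨q, h1⟩)

lemma stepRp_origin {I : Inst ν} {c : Config ν I.P} {S : Superstep ν I.P}
    (hss : ssValid I c S) {p : Fin I.P} {y : ν}
    (hy : y ∈ (stepConfig c S).R p) :
    y ∈ c.R p ∨ Op.compute y ∈ S.comp p ∨ y ∈ S.load p := by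
  rcases Finset.mem_union.1 hy with h | h
  · have h2 : y ∈ afterComp c S p := foldl_erase_subset _ _ h
    rcases afterComp_origin hss h2 with h3 | h3
    · exact Or.inl h3
    · exact Or.inr (Or.inl h3)
  · exact Or.inr (Or.inr (List.mem_toFinset.1 h))

lemma origin (I : Inst ν) :
    ∀ (sched : Schedule ν I.P) (c : Config ν I.P), schedValidFrom I c sched →
    ∀ y : ν,
    ((∃ S ∈ sched, ∃ p, y ∈ S.save p ∨ y ∈ S.load p)
      ∨ y ∈ (runSched c sched).B ∨ ∃ p, y ∈ (runSched c sched).R p) →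
    (∃ p, y ∈ c.R p) ∨ y ∈ c.B ∨ ∃ S ∈ sched, ∃ p, Op.compute y ∈ S.comp p := by
  intro sched
  induction sched with
  | nil =>
      intro c _ y hy
      rcases hy with ⟨S, hS, _⟩ | h | ⟨p, h⟩
      · simp at hS
      · exact Or.inr (Or.inl h)
      · exact Or.inl ⟨p, h⟩
  | cons S rest ih =>
      intro c hval y hy
      obtain ⟨hss, hrest⟩ := hval
      -- helper: reduce membership facts at `stepConfig c S` or head events
      have reduce : (y ∈ c.B ∨ (∃ q, y ∈ c.R q) ∨ ∃ q, Op.compute y ∈ S.comp q) →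
          (∃ p, y ∈ c.R p) ∨ y ∈ c.B ∨
            ∃ T ∈ S :: rest, ∃ p, Op.compute y ∈ T.comp p := by
        rintro (h | h | ⟨q, h⟩)
        · exact Or.inr (Or.inl h)
        · exact Or.inl h
        · exact Or.inr (Or.inr ⟨S, List.mem_cons_self, q, h⟩)
      rcases hy with ⟨T, hT, p, hTp⟩ | h | ⟨p, h⟩
      · rcases List.mem_cons.1 hT with rfl | hT'
        · -- event in head superstep
          rcases hTp with hsave | hload
          · have := hss.2.2.1 p y hsave
            rcases afterComp_origin hss this with h1 | h1
            · exact Or.inl ⟨p, h1⟩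
            · exact Or.inr (Or.inr ⟨T, List.mem_cons_self, p, h1⟩)
          · have := hss.2.2.2.1 p y hload
            exact reduce (newB_origin hss this)
        · rcases ih _ hrest y (Or.inl ⟨T, hT', p, hTp⟩) with ⟨q, hq⟩ | hB | ⟨T', hT'', q, hq⟩
          · rcases stepRp_origin hss hq with h1 | h1 | h1
            · exact Or.inl ⟨q, h1⟩
            · exact Or.inr (Or.inr ⟨S, List.mem_cons_self, q, h1⟩)
            · exact reduce (newB_origin hss (hss.2.2.2.1 q y h1))
          · exact reduce (newB_origin hss hB)
          · exact Or.inr (Or.inr ⟨T', List.mem_cons_of_mem _ hT'', q, hq⟩)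
      · rcases ih _ hrest y (Or.inr (Or.inl h)) with ⟨q, hq⟩ | hB | ⟨T', hT'', q, hq⟩
        · rcases stepRp_origin hss hq with h1 | h1 | h1
          · exact Or.inl ⟨q, h1⟩
          · exact Or.inr (Or.inr ⟨S, List.mem_cons_self, q, h1⟩)
          · exact reduce (newB_origin hss (hss.2.2.2.1 q y h1))
        · exact reduce (newB_origin hss hB)
        · exact Or.inr (Or.inr ⟨T', List.mem_cons_of_mem _ hT'', q, hq⟩)
      · rcases ih _ hrest y (Or.inr (Or.inr ⟨p, h⟩)) with ⟨q, hq⟩ | hB | ⟨T', hT'', q, hq⟩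
        · rcases stepRp_origin hss hq with h1 | h1 | h1
          · exact Or.inl ⟨q, h1⟩
          · exact Or.inr (Or.inr ⟨S, List.mem_cons_self, q, h1⟩)
          · exact reduce (newB_origin hss (hss.2.2.2.1 q y h1))
        · exact reduce (newB_origin hss hB)
        · exact Or.inr (Or.inr ⟨T', List.mem_cons_of_mem _ hT'', q, hq⟩)

lemma load_origin (I : Inst ν) :
    ∀ (sched : Schedule ν I.P) (c : Config ν I.P), schedValidFrom I c sched →
    ∀ y : ν, (∃ S ∈ sched, ∃ p, y ∈ S.load p) →
    y ∈ c.B ∨ ∃ S ∈ sched, ∃ p, y ∈ S.save p := by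
  intro sched
  induction sched with
  | nil => intro c _ y hy; obtain ⟨S, hS, _⟩ := hy; simp at hS
  | cons S rest ih =>
      intro c hval y hy
      obtain ⟨hss, hrest⟩ := hval
      have hBstep : y ∈ newB c S → y ∈ c.B ∨ ∃ T ∈ S :: rest, ∃ p, y ∈ T.save p := by
        intro h
        rcases Finset.mem_union.1 h with h | h
        · exact Or.inl h
        · obtain ⟨q, _, hq⟩ := Finset.mem_biUnion.1 h
          exact Or.inr ⟨S, List.mem_cons_self, q, List.mem_toFinset.1 hq⟩
      obtain ⟨T, hT, p, hTp⟩ := hy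
      rcases List.mem_cons.1 hT with rfl | hT'
      · exact hBstep (hss.2.2.2.1 p y hTp)
      · rcases ih _ hrest y ⟨T, hT', p, hTp⟩ with h | ⟨T', hT'', q, hq⟩
        · exact hBstep h
        · exact Or.inr ⟨T', List.mem_cons_of_mem _ hT'', q, hq⟩

lemma compute_parent_origin (I : Inst ν) {x x' : ν} (hedge : I.edge x x') :
    ∀ (sched : Schedule ν I.P) (c : Config ν I.P), schedValidFrom I c sched →
    ∀ p : Fin I.P, (∃ S ∈ sched, Op.compute x' ∈ S.comp p) →
    x ∈ c.R p ∨ ∃ T ∈ sched, (Op.compute x ∈ T.comp p ∨ x ∈ T.load p) := by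
  intro sched
  induction sched with
  | nil => intro c _ p hy; obtain ⟨S, hS, _⟩ := hy; simp at hS
  | cons S rest ih =>
      intro c hval p hy
      obtain ⟨hss, hrest⟩ := hval
      obtain ⟨T, hT, hTp⟩ := hy
      rcases List.mem_cons.1 hT with rfl | hT'
      · rcases parent_mem_of_compute I hedge _ _ _ (hss.2.1 p) hTp with h | h | h
        · exact Or.inl h
        · exact Or.inr ⟨T, List.mem_cons_self, Or.inl h⟩
        · rcases hss.1 p _ h with ⟨v, hv⟩ | ⟨v, hv⟩ <;> simp at hv
      · rcases ih _ hrest p ⟨T, hT', hTp⟩ with h | ⟨T', hT'', hq⟩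
        · rcases stepRp_origin hss h with h1 | h1 | h1
          · exact Or.inl h1
          · exact Or.inr ⟨S, List.mem_cons_self, Or.inl h1⟩
          · exact Or.inr ⟨S, List.mem_cons_self, Or.inr h1⟩
        · exact Or.inr ⟨T', List.mem_cons_of_mem _ hT'', hq⟩

end Aux

section ZAux

variable {ν : Type} [DecidableEq ν]

def allSaves : Schedule ν 2 → List ν
  | [] => []
  | S :: rest => S.save 0 ++ S.save 1 ++ allSaves rest

def allLoads : Schedule ν 2 → List ν
  | [] => []
  | S :: rest => S.load 0 ++ S.load 1 ++ allLoads rest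

lemma mem_allSaves : ∀ (sched : Schedule ν 2) (y : ν),
    (∃ S ∈ sched, ∃ p : Fin 2, y ∈ S.save p) → y ∈ allSaves sched := by
  intro sched
  induction sched with
  | nil => rintro y ⟨S, hS, -⟩; simp at hS
  | cons T rest ih =>
      rintro y ⟨S, hS, p, hp⟩
      show y ∈ T.save 0 ++ T.save 1 ++ allSaves rest
      rcases List.mem_cons.1 hS with rfl | hS'
      · refine List.mem_append.2 (Or.inl ?_)
        fin_cases p
        · exact List.mem_append.2 (Or.inl hp)
        · exact List.mem_append.2 (Or.inr hp)
      · exact List.mem_append.2 (Or.inr (ih y ⟨S, hS', p, hp⟩))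

lemma mem_allLoads : ∀ (sched : Schedule ν 2) (y : ν),
    (∃ S ∈ sched, ∃ p : Fin 2, y ∈ S.load p) → y ∈ allLoads sched := by
  intro sched
  induction sched with
  | nil => rintro y ⟨S, hS, -⟩; simp at hS
  | cons T rest ih =>
      rintro y ⟨S, hS, p, hp⟩
      show y ∈ T.load 0 ++ T.load 1 ++ allLoads rest
      rcases List.mem_cons.1 hS with rfl | hS'
      · refine List.mem_append.2 (Or.inl ?_)
        fin_cases p
        · exact List.mem_append.2 (Or.inl hp)
        · exact List.mem_append.2 (Or.inr hp)
      · exact List.mem_append.2 (Or.inr (ih y ⟨S, hS', p, hp⟩))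

lemma ioCost_zipper (d m : ℕ) (r g L : ℝ) (l : List (ZNode d m)) :
    ioCost (zipper d m r g L) l = l.length * g := by
  induction l with
  | nil => simp [ioCost]
  | cons v rest ih =>
      simp only [ioCost, List.map_cons, List.sum_cons] at *
      rw [ih]
      show 1 * g + _ = _
      simp [List.length_cons]
      push_cast
      ring

lemma listCost_nonneg (d m : ℕ) (r g L : ℝ) (hg : 0 ≤ g) (l : List (Op (ZNode d m))) :
    0 ≤ listCost (zipper d m r g L) l := by
  refine List.sum_nonneg ?_
  intro x hx
  obtain ⟨op, _, rfl⟩ := List.mem_map.1 hx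
  cases op with
  | load v => show (0:ℝ) ≤ 1 * g; linarith
  | save v => show (0:ℝ) ≤ 1 * g; linarith
  | compute v => show (0:ℝ) ≤ 1; norm_num
  | delete v => exact le_refl 0

lemma fin2_avg_le_iSup (f : Fin 2 → ℝ) : (f 0 + f 1) / 2 ≤ ⨆ p, f p := by
  have h0 := le_ciSup (Set.Finite.bddAbove (Set.finite_range f)) (0 : Fin 2)
  have h1 := le_ciSup (Set.Finite.bddAbove (Set.finite_range f)) (1 : Fin 2)
  linarith

lemma fin2_iSup_nonneg (f : Fin 2 → ℝ) (h : 0 ≤ f 0) : 0 ≤ ⨆ p, f p :=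
  le_trans h (le_ciSup (Set.Finite.bddAbove (Set.finite_range f)) (0 : Fin 2))

lemma syncCost_ge (d m : ℕ) (r g L : ℝ) (hg : 0 ≤ g) (hL : 0 ≤ L) :
    ∀ sched : Schedule (ZNode d m) 2,
    g / 2 * (allSaves sched).length + g / 2 * (allLoads sched).length
      ≤ syncCost (zipper d m r g L) sched := by
  intro sched
  induction sched with
  | nil => simp [syncCost, allSaves, allLoads]; exact le_refl 0
  | cons S rest ih =>
      have hcost : syncCost (zipper d m r g L) (S :: rest)
          = ssCost (zipper d m r g L) S + syncCost (zipper d m r g L) rest := by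
        rfl
      have hsavelen : (allSaves (S :: rest)).length
          = (S.save 0).length + (S.save 1).length + (allSaves rest).length := by
        show (S.save 0 ++ S.save 1 ++ allSaves rest).length = _
        simp [Nat.add_assoc]
      have hloadlen : (allLoads (S :: rest)).length
          = (S.load 0).length + (S.load 1).length + (allLoads rest).length := by
        show (S.load 0 ++ S.load 1 ++ allLoads rest).length = _
        simp [Nat.add_assoc]
      have hS2 : ssCost (zipper d m r g L) S
          = (⨆ p : Fin 2, listCost (zipper d m r g L) (S.comp p))
            + (⨆ p : Fin 2, ioCost (zipper d m r g L) (S.save p))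
            + (⨆ p : Fin 2, ioCost (zipper d m r g L) (S.load p)) + L := rfl
      have hs : (((S.save 0).length : ℝ) * g + ((S.save 1).length : ℝ) * g) / 2
          ≤ ⨆ p : Fin 2, ioCost (zipper d m r g L) (S.save p) := by
        have := fin2_avg_le_iSup (fun p : Fin 2 => ioCost (zipper d m r g L) (S.save p))
        simpa [ioCost_zipper] using this
      have hl : (((S.load 0).length : ℝ) * g + ((S.load 1).length : ℝ) * g) / 2
          ≤ ⨆ p : Fin 2, ioCost (zipper d m r g L) (S.load p) := by
        have := fin2_avg_le_iSup (fun p : Fin 2 => ioCost (zipper d m r g L) (S.load p))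
        simpa [ioCost_zipper] using this
      have hc : 0 ≤ ⨆ p : Fin 2, listCost (zipper d m r g L) (S.comp p) :=
        fin2_iSup_nonneg _ (listCost_nonneg d m r g L hg _)
      have hss : (((S.save 0).length : ℝ) * g + ((S.save 1).length : ℝ) * g) / 2
            + (((S.load 0).length : ℝ) * g + ((S.load 1).length : ℝ) * g) / 2
          ≤ ssCost (zipper d m r g L) S := by
        rw [hS2]
        linarith
      refine le_of_le_of_eq ?_ hcost.symm
      rw [hsavelen, hloadlen]
      push_cast
      linarith

end ZAux

section Chain

lemma chain_lemma {d m : ℕ} (hm : 2 ≤ m) {r g L : ℝ}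
    (sched : Schedule (ZNode d m) 2) (B0 : Finset (ZNode d m))
    (hsched : schedValidFrom (zipper d m r g L)
      (⟨fun _ => ∅, B0⟩ : Config (ZNode d m) 2) sched)
    (w : Fin m → ZNode d m) (pin : Fin m → Fin 2)
    (hedge : ∀ i j : Fin m, (j : ℕ) = (i : ℕ) + 1 → zEdge d m (w i) (w j))
    (hnotB0 : ∀ i, w i ∉ B0)
    (hsink : w ⟨m - 1, by omega⟩
      ∈ (runSched (⟨fun _ => ∅, B0⟩ : Config (ZNode d m) 2) sched).B)
    (hpin : ∀ (k : Fin m), ∀ T ∈ sched, ∀ p, Op.compute (w k) ∈ T.comp p → p = pin k)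
    (hpinalt : ∀ i j : Fin m, (j : ℕ) = (i : ℕ) + 1 → pin i ≠ pin j) :
    ∀ i : Fin m, (i : ℕ) + 1 < m →
      (∃ S ∈ sched, ∃ p : Fin 2, w i ∈ S.save p) ∧
      (∃ S ∈ sched, ∃ p : Fin 2, w i ∈ S.load p) := by
  set I := zipper d m r g L with hI
  set c0 : Config (ZNode d m) 2 := ⟨fun _ => ∅, B0⟩ with hc0
  have hcomp : ∀ j : Fin m, ∃ S ∈ sched, ∃ p, Op.compute (w j) ∈ S.comp p := by
    have key : ∀ t, t < m →
        ∃ S ∈ sched, ∃ p, Op.compute (w ⟨m - 1 - t, by omega⟩) ∈ S.comp p := by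
      intro t
      induction t with
      | zero =>
          intro _
          have h := origin I sched c0 hsched (w ⟨m - 1, by omega⟩)
            (Or.inr (Or.inl hsink))
          rcases h with ⟨p, hp⟩ | hB | h
          · exact absurd hp (Finset.notMem_empty _)
          · exact absurd hB (hnotB0 _)
          · exact h
      | succ t iht =>
          intro ht
          obtain ⟨S, hS, p, hp⟩ := iht (by omega)
          have hedge' : I.edge (w ⟨m - 1 - (t + 1), by omega⟩) (w ⟨m - 1 - t, by omega⟩) :=
            hedge _ _ (by simp; omega)
          have h := compute_parent_origin I hedge' sched c0 hsched p ⟨S, hS, hp⟩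
          rcases h with h | ⟨T, hT, hc | hl⟩
          · exact absurd h (Finset.notMem_empty _)
          · exact ⟨T, hT, p, hc⟩
          · have h2 := origin I sched c0 hsched _ (Or.inl ⟨T, hT, p, Or.inr hl⟩)
            rcases h2 with ⟨q, hq⟩ | hB | h2
            · exact absurd hq (Finset.notMem_empty _)
            · exact absurd hB (hnotB0 _)
            · exact h2
    intro j
    have h := key (m - 1 - (j : ℕ)) (by omega)
    have hj : (⟨m - 1 - (m - 1 - (j : ℕ)), by omega⟩ : Fin m) = j :=
      Fin.ext (by simp; omega)
    rwa [hj] at h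
  intro i hi
  obtain ⟨S, hS, p, hp⟩ := hcomp ⟨(i : ℕ) + 1, hi⟩
  have hpin1 : p = pin ⟨(i : ℕ) + 1, hi⟩ := hpin _ S hS p hp
  have hedge' : I.edge (w i) (w ⟨(i : ℕ) + 1, hi⟩) := hedge _ _ rfl
  have h := compute_parent_origin I hedge' sched c0 hsched p ⟨S, hS, hp⟩
  rcases h with h | ⟨T, hT, hc | hl⟩
  · exact absurd h (Finset.notMem_empty _)
  · have h2 : p = pin i := hpin _ T hT p hc
    exact absurd (h2.symm.trans hpin1) (hpinalt i ⟨(i : ℕ) + 1, hi⟩ rfl)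
  · have hload : ∃ S ∈ sched, ∃ p, w i ∈ S.load p := ⟨T, hT, p, hl⟩
    have hsave := load_origin I sched c0 hsched _ hload
    rcases hsave with hB | hs
    · exact absurd hB (hnotB0 _)
    · exact ⟨hs, hload⟩

end Chain

/-- For `d ≥ 1`, `m ≥ 2`, `g, L ≥ 0`, `r ≥ d+2`, on the zipper DAG
`Z(d,m)` with `P = 2`: in every valid schedule computing every child of `H₁` on
processor 1 and every child of `H₂` on processor 2, each of the `2(m−1)` nodes
`v_i, u_i` (`i ∈ [m−1]`) is saved at least once and loaded at least once; hence the
synchronous cost is at least `2(m−1)·g`. -/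
theorem statement_3 (d m : ℕ) (hd : 1 ≤ d) (hm : 2 ≤ m) (r g L : ℝ)
    (hr : (d : ℝ) + 2 ≤ r) (hg : 0 ≤ g) (hL : 0 ≤ L)
    (sched : Schedule (ZNode d m) 2)
    (hval : Valid (zipper d m r g L) sched)
    (hproc1 : ∀ S ∈ sched, ∀ p : Fin 2, ∀ x : ZNode d m,
      (∃ h : Fin d, zEdge d m (ZNode.h1 h) x) → Op.compute x ∈ S.comp p → p = 0)
    (hproc2 : ∀ S ∈ sched, ∀ p : Fin 2, ∀ x : ZNode d m,
      (∃ h : Fin d, zEdge d m (ZNode.h2 h) x) → Op.compute x ∈ S.comp p → p = 1) :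
    (∀ i : Fin m, (i : ℕ) + 1 < m →
      (∃ S ∈ sched, ∃ p : Fin 2, ZNode.v i ∈ S.save p) ∧
      (∃ S ∈ sched, ∃ p : Fin 2, ZNode.v i ∈ S.load p) ∧
      (∃ S ∈ sched, ∃ p : Fin 2, ZNode.u i ∈ S.save p) ∧
      (∃ S ∈ sched, ∃ p : Fin 2, ZNode.u i ∈ S.load p)) ∧
    ((2 * (m - 1) : ℕ) : ℝ) * g ≤ syncCost (zipper d m r g L) sched := by
  classical
  obtain ⟨B0, hB0, hsched, hsinks⟩ := hval
  have hvpar : ∀ i : Fin m, ∃ y, zEdge d m y (ZNode.v i) := by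
    intro i
    rcases Nat.even_or_odd ((i : ℕ) + 1) with he | ho
    · exact ⟨ZNode.h1 ⟨0, hd⟩, he⟩
    · exact ⟨ZNode.h2 ⟨0, hd⟩, ho⟩
  have hupar : ∀ i : Fin m, ∃ y, zEdge d m y (ZNode.u i) := by
    intro i
    rcases Nat.even_or_odd ((i : ℕ) + 1) with he | ho
    · exact ⟨ZNode.h2 ⟨0, hd⟩, he⟩
    · exact ⟨ZNode.h1 ⟨0, hd⟩, ho⟩
  have hvB0 : ∀ i : Fin m, ZNode.v i ∉ B0 := fun i h => (hB0 _).1 h (hvpar i)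
  have huB0 : ∀ i : Fin m, ZNode.u i ∉ B0 := fun i h => (hB0 _).1 h (hupar i)
  have hsinkv : isSink (zipper d m r g L) (ZNode.v ⟨m - 1, by omega⟩) := by
    rintro ⟨y, hy⟩
    cases y with
    | v j =>
        have h2 := j.isLt
        have h3 : (j : ℕ) = m - 1 + 1 := hy
        omega
    | u j => exact hy
    | h1 a => exact hy
    | h2 a => exact hy
  have hsinku : isSink (zipper d m r g L) (ZNode.u ⟨m - 1, by omega⟩) := by
    rintro ⟨y, hy⟩
    cases y with
    | u j =>
        have h2 := j.isLt
        have h3 : (j : ℕ) = m - 1 + 1 := hy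
        omega
    | v j => exact hy
    | h1 a => exact hy
    | h2 a => exact hy
  have hsinkBv := hsinks _ hsinkv
  have hsinkBu := hsinks _ hsinku
  have hpinv : ∀ (k : Fin m), ∀ T ∈ sched, ∀ p, Op.compute (ZNode.v k) ∈ T.comp p →
      p = (if Even ((k : ℕ) + 1) then (0 : Fin 2) else 1) := by
    intro k T hT p hp
    by_cases he : Even ((k : ℕ) + 1)
    · rw [if_pos he]
      exact hproc1 T hT p (ZNode.v k) ⟨⟨0, hd⟩, he⟩ hp
    · rw [if_neg he]
      exact hproc2 T hT p (ZNode.v k) ⟨⟨0, hd⟩, Nat.not_even_iff_odd.1 he⟩ hp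
  have hpinu : ∀ (k : Fin m), ∀ T ∈ sched, ∀ p, Op.compute (ZNode.u k) ∈ T.comp p →
      p = (if Even ((k : ℕ) + 1) then (1 : Fin 2) else 0) := by
    intro k T hT p hp
    by_cases he : Even ((k : ℕ) + 1)
    · rw [if_pos he]
      exact hproc2 T hT p (ZNode.u k) ⟨⟨0, hd⟩, he⟩ hp
    · rw [if_neg he]
      exact hproc1 T hT p (ZNode.u k) ⟨⟨0, hd⟩, Nat.not_even_iff_odd.1 he⟩ hp
  have hparity : ∀ i j : Fin m, (j : ℕ) = (i : ℕ) + 1 →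
      (Even ((j : ℕ) + 1) ↔ ¬ Even ((i : ℕ) + 1)) := by
    intro i j hj
    rw [hj]
    exact Nat.even_add_one
  have haltv : ∀ i j : Fin m, (j : ℕ) = (i : ℕ) + 1 →
      (if Even ((i : ℕ) + 1) then (0 : Fin 2) else 1)
        ≠ (if Even ((j : ℕ) + 1) then (0 : Fin 2) else 1) := by
    intro i j hj
    have h := hparity i j hj
    by_cases he : Even ((i : ℕ) + 1)
    · rw [if_pos he, if_neg (fun h2 => (h.1 h2) he)]
      decide
    · rw [if_neg he, if_pos (h.2 he)]
      decide
  have haltu : ∀ i j : Fin m, (j : ℕ) = (i : ℕ) + 1 →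
      (if Even ((i : ℕ) + 1) then (1 : Fin 2) else 0)
        ≠ (if Even ((j : ℕ) + 1) then (1 : Fin 2) else 0) := by
    intro i j hj
    have h := hparity i j hj
    by_cases he : Even ((i : ℕ) + 1)
    · rw [if_pos he, if_neg (fun h2 => (h.1 h2) he)]
      decide
    · rw [if_neg he, if_pos (h.2 he)]
      decide
  have mainv := chain_lemma hm sched B0 hsched (fun i => ZNode.v i)
    (fun k => if Even ((k : ℕ) + 1) then (0 : Fin 2) else 1)
    (fun i j h => h) (fun i => hvB0 i) hsinkBv hpinv haltv
  have mainu := chain_lemma hm sched B0 hsched (fun i => ZNode.u i)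
    (fun k => if Even ((k : ℕ) + 1) then (1 : Fin 2) else 0)
    (fun i j h => h) (fun i => huB0 i) hsinkBu hpinu haltu
  have main : ∀ i : Fin m, (i : ℕ) + 1 < m →
      (∃ S ∈ sched, ∃ p : Fin 2, ZNode.v i ∈ S.save p) ∧
      (∃ S ∈ sched, ∃ p : Fin 2, ZNode.v i ∈ S.load p) ∧
      (∃ S ∈ sched, ∃ p : Fin 2, ZNode.u i ∈ S.save p) ∧
      (∃ S ∈ sched, ∃ p : Fin 2, ZNode.u i ∈ S.load p) := by
    intro i hi
    obtain ⟨hv1, hv2⟩ := mainv i hi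
    obtain ⟨hu1, hu2⟩ := mainu i hi
    exact ⟨hv1, hv2, hu1, hu2⟩
  refine ⟨main, ?_⟩
  -- counting
  have hmlt : m - 1 < m := by omega
  set f : Fin (m - 1) ⊕ Fin (m - 1) → ZNode d m := fun a =>
    Sum.elim (fun j : Fin (m - 1) => ZNode.v ⟨(j : ℕ), lt_trans j.isLt hmlt⟩)
             (fun j : Fin (m - 1) => ZNode.u ⟨(j : ℕ), lt_trans j.isLt hmlt⟩) a with hf
  have hinj : Function.Injective f := by
    rintro (a | a) (b | b) hab <;>
      simp only [hf, Sum.elim_inl, Sum.elim_inr, ZNode.v.injEq, ZNode.u.injEq,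
        Fin.mk.injEq] at hab
    · exact congrArg Sum.inl (Fin.ext hab)
    · cases hab
    · cases hab
    · exact congrArg Sum.inr (Fin.ext hab)
  have hcardf : (Finset.univ.image f).card = 2 * (m - 1) := by
    rw [Finset.card_image_of_injective _ hinj, Finset.card_univ, Fintype.card_sum,
      Fintype.card_fin]
    ring
  have hbound : ∀ (al : List (ZNode d m)), (∀ a, f a ∈ al.toFinset) →
      2 * (m - 1) ≤ al.length := by
    intro al hmem
    have h2 : Finset.univ.image f ⊆ al.toFinset := by
      intro y hy
      obtain ⟨a, _, rfl⟩ := Finset.mem_image.1 hy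
      exact hmem a
    calc 2 * (m - 1) = (Finset.univ.image f).card := hcardf.symm
      _ ≤ al.toFinset.card := Finset.card_le_card h2
      _ ≤ al.length := al.toFinset_card_le
  have hlenS : 2 * (m - 1) ≤ (allSaves sched).length := by
    refine hbound _ ?_
    rintro (a | a)
    · exact List.mem_toFinset.2 (mem_allSaves sched _
        ((main ⟨(a : ℕ), lt_trans a.isLt hmlt⟩ (by show (a : ℕ) + 1 < m; have := a.isLt; omega)).1)) 
    · exact List.mem_toFinset.2 (mem_allSaves sched _
        ((main ⟨(a : ℕ), lt_trans a.isLt hmlt⟩ (by show (a : ℕ) + 1 < m; have := a.isLt; omega)).2.2.1))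
  have hlenL : 2 * (m - 1) ≤ (allLoads sched).length := by
    refine hbound _ ?_
    rintro (a | a)
    · exact List.mem_toFinset.2 (mem_allLoads sched _
        ((main ⟨(a : ℕ), lt_trans a.isLt hmlt⟩ (by show (a : ℕ) + 1 < m; have := a.isLt; omega)).2.1))
    · exact List.mem_toFinset.2 (mem_allLoads sched _
        ((main ⟨(a : ℕ), lt_trans a.isLt hmlt⟩ (by show (a : ℕ) + 1 < m; have := a.isLt; omega)).2.2.2))
  have hcost := syncCost_ge d m r g L hg hL sched
  have hg2 : (0 : ℝ) ≤ g / 2 := by linarith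
  have h2 : g / 2 * ((2 * (m - 1) : ℕ) : ℝ) ≤ g / 2 * ((allSaves sched).length : ℝ) :=
    mul_le_mul_of_nonneg_left (by exact_mod_cast hlenS) hg2
  have h3 : g / 2 * ((2 * (m - 1) : ℕ) : ℝ) ≤ g / 2 * ((allLoads sched).length : ℝ) :=
    mul_le_mul_of_nonneg_left (by exact_mod_cast hlenL) hg2
  calc ((2 * (m - 1) : ℕ) : ℝ) * g
      = g / 2 * ((2 * (m - 1) : ℕ) : ℝ) + g / 2 * ((2 * (m - 1) : ℕ) : ℝ) := by ring
    _ ≤ g / 2 * ((allSaves sched).length : ℝ) + g / 2 * ((allLoads sched).length : ℝ) :=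
        add_le_add h2 h3
    _ ≤ syncCost (zipper d m r g L) sched := hcost

end MBSP
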